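/- For all real t with 0 < t < 1, one has (π·arcsin t)/(2t) < F(t) < (π/(4t))·ln((1+t)/(1−t)). -/

import Mathlib

open Real Finset MeasureTheory

noncomputable def W : ℕ → ℝ := fun n => ∏ i ∈ Finset.range n, (2*(i:ℝ)+1)/(2*i+2)

lemma W_zero : W 0 = 1 := by simp [W]

lemma W_succ (n : ℕ) : W (n+1) = W n * ((2*(n:ℝ)+1)/(2*n+2)) := by
  simp [W, Finset.prod_range_succ, mul_div_mul_comm]

lemma W_pos (n : ℕ) : 0 < W n := by
  apply Finset.prod_pos
  intro i _
  positivity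

lemma W_le_one (n : ℕ) : W n ≤ 1 := by
  apply Finset.prod_le_one
  · intro i _; positivity
  · intro i _
    rw [div_le_one (by positivity)]
    linarith

lemma W_ge (n : ℕ) : 1/(2*(n:ℝ)+1) ≤ W n := by
  induction n with
  | zero => simp [W_zero]
  | succ n ih =>
      rw [W_succ]
      push_cast
      have h2 : (0:ℝ) < 2*(n:ℝ)+2 := by positivity
      have heq : 1/(2*(n:ℝ)+1) * ((2*(n:ℝ)+1)/(2*n+2)) = 1/(2*(n:ℝ)+2) := by
        field_simp
      calc 1/(2*((n:ℝ)+1)+1) ≤ 1/(2*(n:ℝ)+2) := by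
            apply one_div_le_one_div_of_le h2; linarith
        _ = 1/(2*(n:ℝ)+1) * ((2*(n:ℝ)+1)/(2*n+2)) := heq.symm
        _ ≤ W n * ((2*(n:ℝ)+1)/(2*n+2)) := by
            apply mul_le_mul_of_nonneg_right ih; positivity

lemma W_sq_le (n : ℕ) : (2*(n:ℝ)+1) * W n^2 ≤ 1 := by
  induction n with
  | zero => simp [W_zero]
  | succ n ih =>
    rw [W_succ]
    push_cast
    have key : (2*((n:ℝ)+1)+1) * (W n * ((2*(n:ℝ)+1)/(2*n+2)))^2
        = ((2*(n:ℝ)+1) * W n^2) * ((2*(n:ℝ)+1)*(2*n+3)/(2*n+2)^2) := by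
      field_simp; ring
    rw [key]
    have hle : (2*(n:ℝ)+1)*(2*n+3)/(2*n+2)^2 ≤ 1 := by
      rw [div_le_one (by positivity)]; nlinarith
    calc ((2*(n:ℝ)+1) * W n^2) * ((2*(n:ℝ)+1)*(2*n+3)/(2*n+2)^2)
        ≤ 1 * 1 := mul_le_mul ih hle (by positivity) (by norm_num)
      _ = 1 := by norm_num

lemma W_conv (n : ℕ) : ∑ k ∈ Finset.range (n+1), W k * W (n-k) = 1 := by
  induction n with
  | zero => simp [W_zero]
  | succ n ih =>
    have refl1 : ∑ k ∈ Finset.range (n+1), (2*(k:ℝ)+1) * W k * W (n-k)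
        = ∑ k ∈ Finset.range (n+1), (2*((n:ℝ)-k)+1) * W (n-k) * W k := by
      rw [← Finset.sum_range_reflect]
      apply Finset.sum_congr rfl
      intro k hk
      rw [Finset.mem_range] at hk
      have hk' : k ≤ n := Nat.lt_succ_iff.mp hk
      have e1 : n + 1 - 1 - k = n - k := by omega
      have e2 : n - (n - k) = k := by omega
      rw [e1, e2, Nat.cast_sub hk']
    have h2 : (∑ k ∈ Finset.range (n+1), (2*(k:ℝ)+1) * W k * W (n-k))
        + ∑ k ∈ Finset.range (n+1), (2*((n:ℝ)-k)+1) * W (n-k) * W k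
        = (2*(n:ℝ)+2) * ∑ k ∈ Finset.range (n+1), W k * W (n-k) := by
      rw [← Finset.sum_add_distrib, Finset.mul_sum]
      apply Finset.sum_congr rfl
      intro k _; ring
    have U_eq : ∑ k ∈ Finset.range (n+1), (2*(k:ℝ)+1) * W k * W (n-k) = (n:ℝ)+1 := by
      rw [ih] at h2
      rw [refl1] at h2 ⊢
      linarith
    -- V = ∑_{j ∈ range (n+2)} 2j W j W (n+1-j)
    have reflV : ∑ j ∈ Finset.range (n+2), 2*(j:ℝ) * W j * W (n+1-j)
        = ∑ j ∈ Finset.range (n+2), 2*((n:ℝ)+1-j) * W (n+1-j) * W j := by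
      rw [← Finset.sum_range_reflect]
      apply Finset.sum_congr rfl
      intro j hj
      rw [Finset.mem_range] at hj
      have hj' : j ≤ n+1 := Nat.lt_succ_iff.mp hj
      have e1 : n + 2 - 1 - j = n + 1 - j := by omega
      have e2 : n + 1 - (n + 1 - j) = j := by omega
      rw [e1, e2, Nat.cast_sub hj']
      push_cast
      ring
    have hV2 : (∑ j ∈ Finset.range (n+2), 2*(j:ℝ) * W j * W (n+1-j))
        + ∑ j ∈ Finset.range (n+2), 2*((n:ℝ)+1-j) * W (n+1-j) * W j
        = (2*(n:ℝ)+2) * ∑ j ∈ Finset.range (n+2), W j * W (n+1-j) := by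
      rw [← Finset.sum_add_distrib, Finset.mul_sum]
      apply Finset.sum_congr rfl
      intro j _; ring
    have hVU : ∑ j ∈ Finset.range (n+2), 2*(j:ℝ) * W j * W (n+1-j)
        = ∑ k ∈ Finset.range (n+1), (2*(k:ℝ)+1) * W k * W (n-k) := by
      rw [Finset.sum_range_succ']
      simp only [Nat.cast_zero, mul_zero, zero_mul, add_zero]
      apply Finset.sum_congr rfl
      intro k _
      have hsub : n + 1 - (k + 1) = n - k := by omega
      rw [hsub, W_succ]
      have h2k : (2*(k:ℝ)+2) ≠ 0 := by positivity
      push_cast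
      field_simp
    rw [reflV] at hV2
    rw [← reflV, hVU, U_eq] at hV2
    have h2n : (2*(n:ℝ)+2) ≠ 0 := by positivity
    have hS : ∑ j ∈ Finset.range (n+2), W j * W (n+1-j) = 1 := by
      apply mul_left_cancel₀ h2n
      rw [mul_one]
      linarith [hV2]
    exact hS

lemma summable_W_pow {x : ℝ} (h0 : 0 ≤ x) (h1 : x < 1) : Summable (fun n => W n * x^n) := by
  apply Summable.of_nonneg_of_le
    (fun n => mul_nonneg (W_pos n).le (pow_nonneg h0 n)) (fun n => ?_)
    (summable_geometric_of_lt_one h0 h1)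
  calc W n * x^n ≤ 1 * x^n := mul_le_mul_of_nonneg_right (W_le_one n) (by positivity)
    _ = x^n := one_mul _

lemma hasSum_W_sqrt {x : ℝ} (h0 : 0 ≤ x) (h1 : x < 1) :
    HasSum (fun n => W n * x^n) (1/Real.sqrt (1-x)) := by
  have hs := summable_W_pow h0 h1
  refine (Summable.hasSum_iff hs).mpr ?_
  set S := ∑' n, W n * x^n with hS
  have hprod : Summable fun z : ℕ × ℕ => (W z.1 * x^z.1) * (W z.2 * x^z.2) :=
    hs.mul_of_nonneg hs (fun n => mul_nonneg (W_pos n).le (pow_nonneg h0 n))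
      (fun n => mul_nonneg (W_pos n).le (pow_nonneg h0 n))
  have hsq : S * S = (1-x)⁻¹ := by
    rw [hS, Summable.tsum_mul_tsum_eq_tsum_sum_range hs hs hprod]
    have hterm : ∀ n:ℕ, ∑ k ∈ Finset.range (n+1), (W k * x^k) * (W (n-k) * x^(n-k)) = x^n := by
      intro n
      have h1 : ∀ k ∈ Finset.range (n+1), (W k * x^k) * (W (n-k) * x^(n-k))
          = (W k * W (n-k)) * x^n := by
        intro k hk
        rw [Finset.mem_range] at hk
        have hx : x^k * x^(n-k) = x^n := by rw [← pow_add]; congr 1; omega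
        calc (W k * x^k) * (W (n-k) * x^(n-k)) = (W k * W (n-k)) * (x^k * x^(n-k)) := by ring
          _ = (W k * W (n-k)) * x^n := by rw [hx]
      rw [Finset.sum_congr rfl h1, ← Finset.sum_mul, W_conv, one_mul]
    simp_rw [hterm]
    exact tsum_geometric_of_lt_one h0 h1
  have hSnn : 0 ≤ S := tsum_nonneg (fun n => mul_nonneg (W_pos n).le (pow_nonneg h0 n))
  have : Real.sqrt (S * S) = Real.sqrt ((1-x)⁻¹) := by rw [hsq]
  rw [Real.sqrt_mul_self hSnn, Real.sqrt_inv] at this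
  rw [this, one_div]

lemma integral_sin_pow_even' (n : ℕ) :
    ∫ θ in (0:ℝ)..(π/2), Real.sin θ^(2*n) = (π/2) * W n := by
  induction n with
  | zero => simp [W_zero]
  | succ n ih =>
    have h2 : 2*(n+1) = 2*n + 2 := by ring
    rw [h2, integral_sin_pow]
    simp only [Real.sin_zero, Real.cos_pi_div_two, mul_zero, zero_mul, zero_pow, ne_eq]
    rw [ih, W_succ]
    push_cast
    field_simp
    ring

lemma hasSum_elliptic {t : ℝ} (ht0 : 0 < t) (ht1 : t < 1) :
    HasSum (fun n : ℕ => (π/2) * W n^2 * (t^2)^n)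
      (∫ θ in (0:ℝ)..(π/2), 1 / Real.sqrt (1 - t^2 * Real.sin θ^2)) := by
  have hpi : (0:ℝ) ≤ π/2 := by positivity
  have ht2 : t^2 < 1 := by nlinarith
  have hx : ∀ θ : ℝ, t^2 * Real.sin θ^2 < 1 := by
    intro θ
    calc t^2 * Real.sin θ^2 ≤ t^2 * 1 :=
          mul_le_mul_of_nonneg_left (Real.sin_sq_le_one θ) (by positivity)
      _ < 1 := by linarith
  have hxnn : ∀ θ : ℝ, 0 ≤ t^2 * Real.sin θ^2 := fun θ => by positivity
  have hval : ∀ n : ℕ, (∫ θ in Set.Ioc (0:ℝ) (π/2), W n * (t^2 * Real.sin θ^2)^n)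
      = (π/2) * W n^2 * (t^2)^n := by
    intro n
    rw [← intervalIntegral.integral_of_le hpi]
    have hfun : ∀ θ:ℝ, W n * (t^2 * Real.sin θ^2)^n = (W n * (t^2)^n) * Real.sin θ^(2*n) := by
      intro θ; rw [mul_pow, pow_mul]; ring
    simp_rw [hfun]
    rw [intervalIntegral.integral_const_mul, integral_sin_pow_even']
    ring
  have hF_int : ∀ n : ℕ, IntegrableOn (fun θ : ℝ => W n * (t^2 * Real.sin θ^2)^n)
      (Set.Ioc (0:ℝ) (π/2)) := by
    intro n
    apply Continuous.integrableOn_Ioc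
    continuity
  have hnorm : ∀ (n : ℕ) (θ : ℝ), ‖W n * (t^2 * Real.sin θ^2)^n‖ = W n * (t^2 * Real.sin θ^2)^n :=
    fun n θ => Real.norm_of_nonneg (mul_nonneg (W_pos n).le (pow_nonneg (hxnn θ) n))
  have hF_sum : Summable fun n : ℕ => ∫ θ in Set.Ioc (0:ℝ) (π/2),
      ‖W n * (t^2 * Real.sin θ^2)^n‖ := by
    simp_rw [hnorm, hval]
    apply Summable.of_nonneg_of_le
      (fun n => by
        have := W_pos n
        have : (0:ℝ) ≤ (t^2)^n := pow_nonneg (by positivity) n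
        positivity)
      (fun n => ?_)
      ((summable_geometric_of_lt_one (by positivity) ht2).mul_left (π/2))
    have h1 : W n^2 ≤ 1 := by
      have := W_pos n
      nlinarith [W_le_one n]
    calc (π/2) * W n^2 * (t^2)^n ≤ (π/2) * 1 * (t^2)^n := by
          apply mul_le_mul_of_nonneg_right _ (pow_nonneg (by positivity) n)
          apply mul_le_mul_of_nonneg_left h1 (by positivity)
      _ = π/2 * (t^2)^n := by ring
  have key := MeasureTheory.hasSum_integral_of_summable_integral_norm
    (μ := volume.restrict (Set.Ioc (0:ℝ) (π/2)))
    (F := fun (n:ℕ) (θ:ℝ) => W n * (t^2 * Real.sin θ^2)^n) hF_int hF_sum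
  have hint : (∫ θ in (0:ℝ)..(π/2), 1 / Real.sqrt (1 - t^2 * Real.sin θ^2))
      = ∫ θ in Set.Ioc (0:ℝ) (π/2), ∑' n : ℕ, W n * (t^2 * Real.sin θ^2)^n := by
    rw [intervalIntegral.integral_of_le hpi]
    apply setIntegral_congr_fun measurableSet_Ioc
    intro θ _
    exact ((hasSum_W_sqrt (hxnn θ) (hx θ)).tsum_eq).symm
  rw [hint]
  have hfe : (fun n : ℕ => (π/2) * W n^2 * (t^2)^n)
      = fun n : ℕ => ∫ θ in Set.Ioc (0:ℝ) (π/2), W n * (t^2 * Real.sin θ^2)^n :=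
    funext fun n => (hval n).symm
  rw [hfe]
  exact key

lemma arcsin_eq_integral {t : ℝ} (ht0 : 0 < t) (ht1 : t < 1) :
    Real.arcsin t = ∫ x in (0:ℝ)..t, 1 / Real.sqrt (1 - x^2) := by
  have hInt : IntervalIntegrable (fun x : ℝ => 1 / Real.sqrt (1 - x^2)) volume 0 t := by
    apply ContinuousOn.intervalIntegrable
    apply ContinuousOn.div continuousOn_const
    · exact (Real.continuous_sqrt.comp (by continuity)).continuousOn
    · intro x hx
      rw [Set.uIcc_of_le ht0.le] at hx
      have h1 : 0 < 1 - x^2 := by nlinarith [hx.1, hx.2]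
      exact (Real.sqrt_pos.mpr h1).ne'
  have hd : ∀ x ∈ Set.uIcc (0:ℝ) t, HasDerivAt Real.arcsin (1 / Real.sqrt (1 - x^2)) x := by
    intro x hx
    rw [Set.uIcc_of_le ht0.le] at hx
    have hm1 : (-1:ℝ) < x := lt_of_lt_of_le (by norm_num) hx.1
    have h1 : x < 1 := lt_of_le_of_lt hx.2 ht1
    exact Real.hasDerivAt_arcsin hm1.ne' h1.ne
  rw [intervalIntegral.integral_eq_sub_of_hasDerivAt hd hInt, Real.arcsin_zero, sub_zero]

lemma hasSum_arcsin' {t : ℝ} (ht0 : 0 < t) (ht1 : t < 1) :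
    HasSum (fun n : ℕ => W n * (t^2)^n * t / (2*(n:ℝ)+1)) (Real.arcsin t) := by
  have ht2 : t^2 < 1 := by nlinarith
  have hval : ∀ n : ℕ, (∫ x in Set.Ioc (0:ℝ) t, W n * (x^2)^n)
      = W n * (t^2)^n * t / (2*(n:ℝ)+1) := by
    intro n
    rw [← intervalIntegral.integral_of_le ht0.le]
    simp_rw [← pow_mul]
    rw [intervalIntegral.integral_const_mul, integral_pow]
    rw [zero_pow (by omega), pow_succ, pow_mul]
    push_cast
    ring
  have hF_int : ∀ n : ℕ, IntegrableOn (fun x : ℝ => W n * (x^2)^n) (Set.Ioc (0:ℝ) t) := by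
    intro n
    apply Continuous.integrableOn_Ioc
    continuity
  have hnorm : ∀ (n : ℕ) (x : ℝ), ‖W n * (x^2)^n‖ = W n * (x^2)^n :=
    fun n x => Real.norm_of_nonneg (mul_nonneg (W_pos n).le (pow_nonneg (sq_nonneg x) n))
  have hF_sum : Summable fun n : ℕ => ∫ x in Set.Ioc (0:ℝ) t, ‖W n * (x^2)^n‖ := by
    simp_rw [hnorm, hval]
    apply Summable.of_nonneg_of_le
      (fun n => by
        have h1 := W_pos n
        have h2 : (0:ℝ) ≤ (t^2)^n := pow_nonneg (by positivity) n
        have h3 : (0:ℝ) < 2*(n:ℝ)+1 := by positivity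
        positivity)
      (fun n => ?_)
      ((summable_geometric_of_lt_one (by positivity) ht2).mul_left t)
    have h2 : (0:ℝ) ≤ (t^2)^n := pow_nonneg (by positivity) n
    have h3 : (1:ℝ) ≤ 2*(n:ℝ)+1 := by
      have := Nat.cast_nonneg (α:=ℝ) n; linarith
    rw [div_le_iff₀ (by positivity)]
    calc W n * (t^2)^n * t ≤ 1 * (t^2)^n * t := by
          apply mul_le_mul_of_nonneg_right _ ht0.le
          exact mul_le_mul_of_nonneg_right (W_le_one n) h2
      _ = t * (t^2)^n * 1 := by ring
      _ ≤ t * (t^2)^n * (2*(n:ℝ)+1) := by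
          apply mul_le_mul_of_nonneg_left h3 (by positivity)
  have key := MeasureTheory.hasSum_integral_of_summable_integral_norm
    (μ := volume.restrict (Set.Ioc (0:ℝ) t))
    (F := fun (n:ℕ) (x:ℝ) => W n * (x^2)^n) hF_int hF_sum
  have hint : Real.arcsin t = ∫ x in Set.Ioc (0:ℝ) t, ∑' n : ℕ, W n * (x^2)^n := by
    rw [arcsin_eq_integral ht0 ht1, intervalIntegral.integral_of_le ht0.le]
    apply setIntegral_congr_fun measurableSet_Ioc
    intro x hx
    have hx1 : 0 ≤ x^2 := sq_nonneg x
    have hx2 : x^2 < 1 := by nlinarith [hx.1, hx.2]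
    exact ((hasSum_W_sqrt hx1 hx2).tsum_eq).symm
  rw [hint]
  have hfe : (fun n : ℕ => W n * (t^2)^n * t / (2*(n:ℝ)+1))
      = fun n : ℕ => ∫ x in Set.Ioc (0:ℝ) t, W n * (x^2)^n :=
    funext fun n => (hval n).symm
  rw [hfe]
  exact key

theorem stmt_19 (t : ℝ) (ht0 : 0 < t) (ht1 : t < 1) :
    (π * Real.arcsin t) / (2 * t)
      < (∫ θ in (0:ℝ)..(π / 2), 1 / Real.sqrt (1 - t ^ 2 * Real.sin θ ^ 2)) ∧
    (∫ θ in (0:ℝ)..(π / 2), 1 / Real.sqrt (1 - t ^ 2 * Real.sin θ ^ 2))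
      < (π / (4 * t)) * Real.log ((1 + t) / (1 - t)) := by
  have hI := hasSum_elliptic ht0 ht1
  have htne : t ≠ 0 := ht0.ne'
  have hW1 : W 1 = 1/2 := by
    have := W_succ 0
    rw [W_zero] at this
    norm_num at this
    simpa using this
  have ht2pos : (0:ℝ) < t^2 := by positivity
  constructor
  · -- lower bound
    have hA := (hasSum_arcsin' ht0 ht1).mul_left (π/(2*t))
    have hfe : (fun n : ℕ => (π/(2*t)) * (W n * (t^2)^n * t / (2*(n:ℝ)+1)))
        = fun n : ℕ => (π/2) * (W n / (2*(n:ℝ)+1)) * (t^2)^n := by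
      funext n
      have h2n : (2*(n:ℝ)+1) ≠ 0 := by positivity
      field_simp
    rw [hfe] at hA
    have hL : (π * Real.arcsin t) / (2*t) = π/(2*t) * Real.arcsin t := by ring
    rw [hL, ← hA.tsum_eq, ← hI.tsum_eq]
    apply Summable.tsum_lt_tsum_of_nonneg (i := 1)
    · intro n
      have := W_pos n
      have h2n : (0:ℝ) < 2*(n:ℝ)+1 := by positivity
      have h2 : (0:ℝ) ≤ (t^2)^n := pow_nonneg ht2pos.le n
      positivity
    · intro n
      have h2n : (0:ℝ) < 2*(n:ℝ)+1 := by positivity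
      have h2 : (0:ℝ) ≤ (t^2)^n := pow_nonneg ht2pos.le n
      have hw : W n / (2*(n:ℝ)+1) ≤ W n^2 := by
        have hge := W_ge n
        have hwp := W_pos n
        rw [div_le_iff₀ h2n] at hge ⊢
        nlinarith [mul_le_mul_of_nonneg_left hge hwp.le]
      have hp2 : (0:ℝ) < π/2 := by positivity
      calc (π/2) * (W n / (2*(n:ℝ)+1)) * (t^2)^n
          ≤ (π/2) * W n^2 * (t^2)^n := by
            apply mul_le_mul_of_nonneg_right _ h2
            exact mul_le_mul_of_nonneg_left hw hp2.le
        _ = (π/2) * W n^2 * (t^2)^n := rfl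
    · -- strict at n = 1
      rw [hW1]
      push_cast
      have hpi := Real.pi_pos
      have h1 : ((1:ℝ)/2) / (2*1+1) = 1/6 := by norm_num
      rw [h1]
      have h2 : ((1:ℝ)/2)^2 = 1/4 := by norm_num
      rw [h2]
      have : (0:ℝ) < (t^2)^1 := by simpa using ht2pos
      nlinarith
    · exact hI.summable
  · -- upper bound
    have habs : |t| < 1 := abs_lt.mpr ⟨by linarith, ht1⟩
    have hlog := Real.hasSum_log_sub_log_of_abs_lt_one habs
    have hB := hlog.mul_left (π/(4*t))
    have hfe : (fun k : ℕ => (π/(4*t)) * ((2:ℝ) * (1/(2*(k:ℝ)+1)) * t^(2*k+1)))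
        = fun k : ℕ => (π/2) * (1/(2*(k:ℝ)+1)) * (t^2)^k := by
      funext k
      have h2k : (2*(k:ℝ)+1) ≠ 0 := by positivity
      rw [pow_succ, pow_mul]
      field_simp
      ring
    rw [hfe] at hB
    have hR : (π/(4*t)) * Real.log ((1+t)/(1-t))
        = (π/(4*t)) * (Real.log (1+t) - Real.log (1-t)) := by
      rw [Real.log_div (by linarith) (by linarith)]
    rw [hR, ← hB.tsum_eq, ← hI.tsum_eq]
    apply Summable.tsum_lt_tsum_of_nonneg (i := 1)
    · intro n
      have := W_pos n
      have h2 : (0:ℝ) ≤ (t^2)^n := pow_nonneg ht2pos.le n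
      positivity
    · intro n
      have h2n : (0:ℝ) < 2*(n:ℝ)+1 := by positivity
      have h2 : (0:ℝ) ≤ (t^2)^n := pow_nonneg ht2pos.le n
      have hw : W n^2 ≤ 1/(2*(n:ℝ)+1) := by
        rw [le_div_iff₀ h2n]
        have := W_sq_le n
        linarith
      apply mul_le_mul_of_nonneg_right _ h2
      apply mul_le_mul_of_nonneg_left hw (by positivity)
    · rw [hW1]
      push_cast
      have hpi := Real.pi_pos
      have : (0:ℝ) < (t^2)^1 := by simpa using ht2pos
      have h1 : ((1:ℝ)/2)^2 = 1/4 := by norm_num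
      rw [h1]
      have h2 : (1:ℝ)/(2*1+1) = 1/3 := by norm_num
      rw [h2]
      nlinarith
    · exact hB.summable
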